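/- Assume the time-varying LPV-algorithm setting with variational IQCs and all hypotheses of the variational-IQC tracking theorem (see context), and suppose in addition that m(θ) = m and L(θ) = L are constant on Θ with 0 < m < L. Define γ_fⁱ := λ_i ρ² (L − m), c₁ := λ̄/λ̲, c₂ := 1/λ̲. Then for all k ≥ 1: ‖ξ_k − ξ⋆_k‖² ≤ c₁ ρ^{2k} ‖ξ_0 − ξ⋆_0‖² + c₂ Σ_{t=1}^{k} ρ^{2(k−t)} ( γ_ξ ‖Δξ⋆_{t−1}‖² + γ_δ Σ_{i=1}^{p} ‖Δδ_{t−1}(s_{t−1}ⁱ)‖² ) + c₂ Σ_{i=1}^{p} γ_fⁱ Σ_{t=1}^{k−1} ρ^{2(k−t−1)} ( f̂_t(s_{t−1}ⁱ) − f̂_{t−1}(s_{t−1}ⁱ) ), where f̂_k(x) = f(x,θ_k) − f(x⋆(θ_k),θ_k), Δξ⋆_k = U x⋆(θ_k) − U x⋆(θ_{k+1}), and Δδ_k(x) = ∇_x f(x,θ_k) − ∇_x f(x,θ_{k+1}). -/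

import Mathlib

open scoped RealInnerProductSpace

/-- Cast a plain function vector to Euclidean space. -/
def toE {ι : Type*} [Fintype ι] (v : ι → ℝ) : EuclideanSpace ℝ ι := WithLp.toLp 2 v

/-- The `i`-th `d`-dimensional block of a stacked vector. -/
def blk {d r : ℕ} (v : Fin r × Fin d → ℝ) (i : Fin r) : Fin d → ℝ :=
  fun j => v (i, j)

/-- The quadratic form `vᵀ P v`. -/
def quadForm {ι : Type*} [Fintype ι] (P : Matrix ι ι ℝ) (v : ι → ℝ) : ℝ :=
  dotProduct v (P.mulVec v)

/-- Pack the algorithm state and the IQC filter states into a single vector. -/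
def pack (nξ p d : ℕ) (ξ : Fin nξ → ℝ) (ζ : Fin p → Fin 4 → Fin d → ℝ) :
    (Fin nξ ⊕ (Fin p × Fin 4 × Fin d)) → ℝ :=
  Sum.elim ξ (fun z => ζ z.1 z.2.1 z.2.2)


section Aux
open Set
open scoped RealInnerProductSpace

variable {E : Type*} [NormedAddCommGroup E] [InnerProductSpace ℝ E] [CompleteSpace E]

variable {E : Type*} [NormedAddCommGroup E] [InnerProductSpace ℝ E] [CompleteSpace E]

lemma conv_grad_ineq (p : E → ℝ) (p' : E → E)
    (hc : ConvexOn ℝ univ p) (hg : ∀ x, HasGradientAt p (p' x) x) (a b : E) :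
    p a + ⟪p' a, b - a⟫ ≤ p b := by
  set c : ℝ → E := fun t => t • (b - a) + a with hcdef
  have hcd : ∀ t : ℝ, HasDerivAt c (b - a) t := fun t => by
    simpa [hcdef] using ((hasDerivAt_id t).smul_const (b - a)).add_const a
  have hgd : ∀ t : ℝ, HasDerivAt (p ∘ c) ⟪p' (c t), b - a⟫ t := by
    intro t
    have h1 := ((hg (c t)).hasFDerivAt).comp_hasDerivAt t (hcd t)
    simpa [InnerProductSpace.toDual_apply_apply] using h1
  have hcv : ConvexOn ℝ univ (p ∘ c) := by
    have := hc.comp_affineMap (AffineMap.lineMap a b : ℝ →ᵃ[ℝ] E)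
    have he : (p ∘ (AffineMap.lineMap a b : ℝ →ᵃ[ℝ] E)) = p ∘ c := by
      funext t; simp [hcdef, AffineMap.lineMap_apply, Function.comp]
    rw [he] at this
    simpa using this
  have hs := hcv.le_slope_of_hasDerivAt (mem_univ (0:ℝ)) (mem_univ (1:ℝ)) one_pos (hgd 0)
  have hc0 : c 0 = a := by simp [hcdef]
  have hc1 : c 1 = b := by simp [hcdef]
  rw [slope_def_field] at hs
  simp only [Function.comp, hc0, hc1] at hs
  simp at hs
  linarith

lemma descent_lemma (p : E → ℝ) (p' : E → E) (M : ℝ) (hM : 0 ≤ M)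
    (hg : ∀ x, HasGradientAt p (p' x) x)
    (hlip : ∀ x y, ‖p' x - p' y‖ ≤ M * ‖x - y‖) (a b : E) :
    p b ≤ p a + ⟪p' a, b - a⟫ + M / 2 * ‖b - a‖ ^ 2 := by
  set c : ℝ → E := fun t => t • (b - a) + a with hcdef
  have hcd : ∀ t : ℝ, HasDerivAt c (b - a) t := fun t => by
    simpa [hcdef] using ((hasDerivAt_id t).smul_const (b - a)).add_const a
  have hgd : ∀ t : ℝ, HasDerivAt (p ∘ c) ⟪p' (c t), b - a⟫ t := by
    intro t
    have h1 := ((hg (c t)).hasFDerivAt).comp_hasDerivAt t (hcd t)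
    simpa [InnerProductSpace.toDual_apply_apply] using h1
  set q : ℝ → ℝ := fun t => p (c t) - t * ⟪p' a, b - a⟫ - M * t ^ 2 / 2 * ‖b - a‖ ^ 2
    with hqdef
  have hqd : ∀ t : ℝ, HasDerivAt q
      (⟪p' (c t), b - a⟫ - ⟪p' a, b - a⟫ - M * t * ‖b - a‖ ^ 2) t := by
    intro t
    have h2 : HasDerivAt (fun t : ℝ => t * ⟪p' a, b - a⟫) ⟪p' a, b - a⟫ t := by
      simpa using (hasDerivAt_id t).mul_const ⟪p' a, b - a⟫
    have h3 : HasDerivAt (fun t : ℝ => M * t ^ 2 / 2 * ‖b - a‖ ^ 2)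
        (M * t * ‖b - a‖ ^ 2) t := by
      have := ((hasDerivAt_pow 2 t).const_mul M).div_const 2 |>.mul_const (‖b - a‖ ^ 2)
      refine this.congr_deriv ?_
      push_cast
      ring
    exact ((hgd t).sub h2).sub h3
  have hmono : AntitoneOn q (Icc (0:ℝ) 1) := by
    apply antitoneOn_of_deriv_nonpos (convex_Icc 0 1)
    · exact fun t _ => ((hqd t).continuousAt).continuousWithinAt
    · intro t _
      exact ((hqd t).differentiableAt).differentiableWithinAt
    · intro t ht
      rw [interior_Icc] at ht
      rw [(hqd t).deriv]
      have hb : ⟪p' (c t) - p' a, b - a⟫ ≤ M * t * ‖b - a‖ ^ 2 := by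
        calc ⟪p' (c t) - p' a, b - a⟫ ≤ ‖p' (c t) - p' a‖ * ‖b - a‖ :=
              real_inner_le_norm _ _
          _ ≤ (M * ‖c t - a‖) * ‖b - a‖ := by
              have := hlip (c t) a
              nlinarith [norm_nonneg (b - a)]
          _ = M * t * ‖b - a‖ ^ 2 := by
              have : c t - a = t • (b - a) := by simp [hcdef]
              rw [this, norm_smul]
              simp [abs_of_pos ht.1]
              ring
      have hexp : ⟪p' (c t) - p' a, b - a⟫ = ⟪p' (c t), b - a⟫ - ⟪p' a, b - a⟫ :=
        inner_sub_left _ _ _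
      linarith
  have hq10 := hmono (left_mem_Icc.2 zero_le_one) (right_mem_Icc.2 zero_le_one) zero_le_one
  have hc0 : c 0 = a := by simp [hcdef]
  have hc1 : c 1 = b := by simp [hcdef]
  simp only [hqdef, hc0, hc1] at hq10
  simp at hq10
  linarith

lemma qub_interp (p : E → ℝ) (p' : E → E) (M : ℝ) (hM : 0 < M)
    (hc : ConvexOn ℝ univ p) (hg : ∀ x, HasGradientAt p (p' x) x)
    (hqub : ∀ x y, p y ≤ p x + ⟪p' x, y - x⟫ + M / 2 * ‖y - x‖ ^ 2) (a b : E) :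
    p a + ⟪p' a, b - a⟫ + 1 / (2 * M) * ‖p' b - p' a‖ ^ 2 ≤ p b := by
  set Δ : E := p' b - p' a with hΔ
  set w : E := b - (1 / M) • Δ with hw
  have h1 : p a + ⟪p' a, w - a⟫ ≤ p w := conv_grad_ineq p p' hc hg a w
  have h2 : p w ≤ p b + ⟪p' b, w - b⟫ + M / 2 * ‖w - b‖ ^ 2 := hqub b w
  have hwb : w - b = -((1 / M) • Δ) := by rw [hw]; abel
  have e1 : ⟪p' a, w - a⟫ = ⟪p' a, b - a⟫ - (1 / M) * ⟪p' a, Δ⟫ := by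
    have : w - a = (b - a) - (1 / M) • Δ := by rw [hw]; abel
    rw [this, inner_sub_right, real_inner_smul_right]
  have e2 : ⟪p' b, w - b⟫ = -((1 / M) * ⟪p' b, Δ⟫) := by
    rw [hwb, inner_neg_right, real_inner_smul_right]
  have e3 : ‖w - b‖ ^ 2 = (1 / M) ^ 2 * ‖Δ‖ ^ 2 := by
    rw [hwb, norm_neg, norm_smul, Real.norm_eq_abs,
      abs_of_pos (by positivity : (0:ℝ) < 1 / M)]
    ring
  have e4 : ⟪p' b, Δ⟫ - ⟪p' a, Δ⟫ = ‖Δ‖ ^ 2 := by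
    rw [← inner_sub_left, ← hΔ, real_inner_self_eq_norm_sq]
  have hM' : M ≠ 0 := ne_of_gt hM
  have hfield : M / 2 * ((1 / M) ^ 2 * ‖Δ‖ ^ 2) = 1 / (2 * M) * ‖Δ‖ ^ 2 := by
    field_simp
  have hfield2 : (1 / M) * ‖Δ‖ ^ 2 - 1 / (2 * M) * ‖Δ‖ ^ 2 = 1 / (2 * M) * ‖Δ‖ ^ 2 := by
    field_simp; ring
  have e5 : (1 / M) * ⟪p' b, Δ⟫ - (1 / M) * ⟪p' a, Δ⟫ = (1 / M) * ‖Δ‖ ^ 2 := by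
    rw [← mul_sub, e4]
  rw [e1] at h1
  rw [e2, e3, hfield] at h2
  linarith

/-- Interpolation inequality for the convexified function of an `m`-strongly convex,
`L`-smooth function. -/
lemma strong_interp (g : E → ℝ) (g' : E → E) (m L : ℝ) (hm : 0 < m) (hmL : m < L)
    (hg : ∀ x, HasGradientAt g (g' x) x)
    (hsc : ConvexOn ℝ univ (fun z => g z - m / 2 * ‖z‖ ^ 2))
    (hlip : ∀ x y, ‖g' x - g' y‖ ≤ L * ‖x - y‖) (z : E) (a b : E) :
    (g a - m / 2 * ‖a - z‖ ^ 2) + ⟪g' a - m • (a - z), b - a⟫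
      + 1 / (2 * (L - m)) * ‖(g' b - m • (b - z)) - (g' a - m • (a - z))‖ ^ 2
      ≤ g b - m / 2 * ‖b - z‖ ^ 2 := by
  have hM : (0:ℝ) < L - m := by linarith
  set p : E → ℝ := fun t => g t - m / 2 * ‖t - z‖ ^ 2 with hpdef
  set p' : E → E := fun t => g' t - m • (t - z) with hp'def
  -- convexity of p
  have hpc : ConvexOn ℝ univ p := by
    have haff : ConvexOn ℝ univ (fun t : E => ⟪m • z, t⟫ - m / 2 * ‖z‖ ^ 2) := by
      refine ⟨convex_univ, fun x _ y _ s t hs ht hst => le_of_eq ?_⟩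
      dsimp only
      rw [inner_add_right, real_inner_smul_right, real_inner_smul_right,
        smul_eq_mul, smul_eq_mul]
      linear_combination (m / 2 * ‖z‖ ^ 2) * hst
    have hsum := hsc.add haff
    have he : ((fun z => g z - m / 2 * ‖z‖ ^ 2) +
        (fun t : E => ⟪m • z, t⟫ - m / 2 * ‖z‖ ^ 2)) = p := by
      funext t
      simp only [Pi.add_apply, hpdef]
      have hexp : ‖t - z‖ ^ 2 = ‖t‖ ^ 2 - 2 * ⟪t, z⟫ + ‖z‖ ^ 2 := norm_sub_sq_real t z
      rw [real_inner_smul_left, real_inner_comm, hexp]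
      ring
    rwa [he] at hsum
  -- gradients of p
  have hpg : ∀ x, HasGradientAt p (p' x) x := by
    intro x
    have h1 : HasFDerivAt (fun w : E => ‖w - z‖ ^ 2)
        (2 • (innerSL ℝ (x - z)).comp (ContinuousLinearMap.id ℝ E)) x := by
      have := ((hasFDerivAt_id x).sub_const z).norm_sq
      simpa using this
    have h2 : HasFDerivAt p
        ((InnerProductSpace.toDual ℝ E (g' x)) -
          (m / 2) • (2 • (innerSL ℝ (x - z)).comp (ContinuousLinearMap.id ℝ E))) x :=
      ((hg x).hasFDerivAt).sub (h1.const_mul (m / 2))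
    rw [hasGradientAt_iff_hasFDerivAt]
    refine h2.congr_fderiv ?_
    apply ContinuousLinearMap.ext
    intro v
    simp only [InnerProductSpace.toDual_apply_apply, ContinuousLinearMap.sub_apply,
      ContinuousLinearMap.smul_apply, innerSL_apply_apply, ContinuousLinearMap.coe_comp',
      Function.comp_apply, ContinuousLinearMap.coe_id', id_eq, hp'def]
    simp only [inner_sub_left, real_inner_smul_left]
    simp only [smul_eq_mul, two_smul]
    rw [real_inner_comm]
    ring
  -- quadratic upper bound for p with constant L - m
  have hqub : ∀ x y, p y ≤ p x + ⟪p' x, y - x⟫ + (L - m) / 2 * ‖y - x‖ ^ 2 := by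
    intro x y
    have hd := descent_lemma g g' L (by linarith) hg hlip x y
    have hsplit : ‖y - z‖ ^ 2 = ‖x - z‖ ^ 2 + 2 * ⟪x - z, y - x⟫ + ‖y - x‖ ^ 2 := by
      have h : y - z = (x - z) + (y - x) := by abel
      rw [h, norm_add_sq_real]
    have hin : ⟪p' x, y - x⟫ = ⟪g' x, y - x⟫ - m * ⟪x - z, y - x⟫ := by
      rw [hp'def]
      dsimp only
      rw [inner_sub_left, real_inner_smul_left]
    rw [hpdef]
    dsimp only
    rw [hin, hsplit]
    nlinarith [hd]
  have := qub_interp p p' (L - m) hM hpc hpg hqub a b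
  simpa [hpdef, hp'def] using this

/-- The storage-like nonnegative quantity used in the telescoping argument. -/
noncomputable def iqcD (g : E → ℝ) (g' : E → E) (m L : ℝ) (z w : E) : ℝ :=
  (L - m) * ((g w - g z) - m / 2 * ‖w - z‖ ^ 2) - 1 / 2 * ‖g' w - m • (w - z)‖ ^ 2

lemma iqcD_nonneg (g : E → ℝ) (g' : E → E) (m L : ℝ) (hm : 0 < m) (hmL : m < L)
    (hg : ∀ x, HasGradientAt g (g' x) x)
    (hsc : ConvexOn ℝ univ (fun z => g z - m / 2 * ‖z‖ ^ 2))
    (hlip : ∀ x y, ‖g' x - g' y‖ ≤ L * ‖x - y‖) (z : E) (hz : g' z = 0) (w : E) :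
    0 ≤ iqcD g g' m L z w := by
  have hM : (0:ℝ) < L - m := by linarith
  have h := strong_interp g g' m L hm hmL hg hsc hlip z z w
  simp only [hz, sub_self, smul_zero, sub_zero, zero_sub, inner_zero_left, norm_neg,
    norm_zero] at h
  -- h : g z - m/2*0 + 0 + 1/(2M) * ‖g' w - m•(w-z)‖^2 ≤ g w - m/2‖w-z‖^2
  have hfld : (L - m) * (1 / (2 * (L - m))) = 1 / 2 := by field_simp
  have h2 := mul_le_mul_of_nonneg_left h hM.le
  unfold iqcD
  nlinarith [h2, hfld]

lemma key_scalar (M ρ2 c1 c2 c3 c4 c5 Py Px : ℝ) (hM : 0 < M) (hρ0 : 0 ≤ ρ2) (hρ1 : ρ2 ≤ 1)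
    (hI : M * Py + 1 / 2 * c2 ≤ M * c1)
    (hII : M * Py + M * (c3 - c1) + 1 / 2 * (c5 - 2 * c4 + c2) ≤ M * Px) :
    ρ2 * (M * c3 - c4 + 1 / 2 * c5 - M * Px) ≤ M * c1 - 1 / 2 * c2 - M * Py := by
  rcases le_or_gt (M * c3 - c4 + 1 / 2 * c5 - M * Px) 0 with hB | hB
  · nlinarith
  · nlinarith

lemma scale_ineq (M a b c : ℝ) (hM : 0 < M) (h : a + 1 / (2 * M) * b ≤ c) :
    M * a + 1 / 2 * b ≤ M * c := by
  have h2 := mul_le_mul_of_nonneg_left h hM.le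
  have he : M * (a + 1 / (2 * M) * b) = M * a + 1 / 2 * b := by field_simp
  linarith

/-- Initial-step sector bound: `σ₀ ≥ D₀`. -/
lemma sigma_zero (g : E → ℝ) (g' : E → E) (m L : ℝ) (hm : 0 < m) (hmL : m < L)
    (hg : ∀ x, HasGradientAt g (g' x) x)
    (hsc : ConvexOn ℝ univ (fun z => g z - m / 2 * ‖z‖ ^ 2))
    (hlip : ∀ x y, ‖g' x - g' y‖ ≤ L * ‖x - y‖) (z : E) (hz : g' z = 0) (y : E) :
    iqcD g g' m L z y ≤ ⟪L • (y - z) - g' y, g' y - m • (y - z)⟫ := by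
  have hM : (0:ℝ) < L - m := by linarith
  have h := strong_interp g g' m L hm hmL hg hsc hlip z y z
  simp only [hz, sub_self, smul_zero, sub_zero, zero_sub, norm_neg, norm_zero] at h
  set u : E := y - z with hu
  set Q : E := g' y - m • u with hQ
  have hzmy : z - y = -u := by rw [hu]; abel
  rw [hzmy, inner_neg_right] at h
  -- h : g y - m/2‖u‖² + -⟪Q, u⟫ + 1/(2M)‖-Q‖² ≤ g z - m/2*0²
  rw [real_inner_comm] at h
  have h3 : (g y - m / 2 * ‖u‖ ^ 2 - ⟪u, Q⟫) + 1 / (2 * (L - m)) * ‖Q‖ ^ 2 ≤ g z := by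
    nlinarith [h]
  have h4 := scale_ineq (L - m) _ _ _ hM h3
  have hvec : L • u - g' y = (L - m) • u - Q := by rw [hQ]; module
  rw [hvec, inner_sub_left, real_inner_smul_left, real_inner_self_eq_norm_sq]
  unfold iqcD
  rw [← hu, ← hQ]
  nlinarith [h4]

/-- Per-step variational sector bound. -/
lemma sigma_step (gp gc : E → ℝ) (gp' gc' : E → E) (m L ρ2 : ℝ) (hm : 0 < m) (hmL : m < L)
    (hρ0 : 0 ≤ ρ2) (hρ1 : ρ2 ≤ 1)
    (hgc : ∀ x, HasGradientAt gc (gc' x) x)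
    (hscc : ConvexOn ℝ univ (fun z => gc z - m / 2 * ‖z‖ ^ 2))
    (hlipc : ∀ x y, ‖gc' x - gc' y‖ ≤ L * ‖x - y‖)
    (zc zp : E) (hzc : gc' zc = 0) (x y : E) :
    iqcD gc gc' m L zc y - ρ2 * iqcD gp gp' m L zp x
      - ρ2 * (L - m) * ((gc x - gc zc) - (gp x - gp zp))
    ≤ ⟪L • (y - zc) - gc' y - ρ2 • (L • (x - zc)) + ρ2 • (gc' x), gc' y - m • (y - zc)⟫
      + ρ2 * (m * (L - m) / 2) * ‖x - zp‖ ^ 2 - ρ2 * (m * (L - m) / 2) * ‖x - zc‖ ^ 2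
      + ρ2 / 2 * ‖gp' x - m • (x - zp)‖ ^ 2 - ρ2 / 2 * ‖gc' x - m • (x - zc)‖ ^ 2 := by
  have hM : (0:ℝ) < L - m := by linarith
  have hI := strong_interp gc gc' m L hm hmL hgc hscc hlipc zc y zc
  have hII := strong_interp gc gc' m L hm hmL hgc hscc hlipc zc y x
  simp only [hzc, sub_self, smul_zero, sub_zero, zero_sub, norm_neg, norm_zero] at hI
  set u : E := y - zc with hu
  set v : E := x - zc with hv
  set Q : E := gc' y - m • u with hQ
  set Qx : E := gc' x - m • v with hQx
  have hzmy : zc - y = -u := by rw [hu]; abel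
  have hxmy : x - y = v - u := by rw [hu, hv]; abel
  rw [hzmy, inner_neg_right, real_inner_comm] at hI
  rw [hxmy, inner_sub_right, norm_sub_sq_real Qx Q, real_inner_comm u Q, real_inner_comm v Q] at hII
  have hI3 : (L - m) * (gc y - m / 2 * ‖u‖ ^ 2 - ⟪u, Q⟫) + 1 / 2 * ‖Q‖ ^ 2
      ≤ (L - m) * gc zc := by
    apply scale_ineq (L - m) _ _ _ hM
    nlinarith [hI]
  have hII3 : (L - m) * (gc y - m / 2 * ‖u‖ ^ 2 + (⟪v, Q⟫ - ⟪u, Q⟫))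
      + 1 / 2 * (‖Qx‖ ^ 2 - 2 * ⟪Qx, Q⟫ + ‖Q‖ ^ 2)
      ≤ (L - m) * (gc x - m / 2 * ‖v‖ ^ 2) := by
    apply scale_ineq (L - m) _ _ _ hM
    nlinarith [hII]
  have hvec : L • u - gc' y - ρ2 • (L • v) + ρ2 • (gc' x)
      = (L - m) • u - Q - (ρ2 * (L - m)) • v + ρ2 • Qx := by
    rw [hQ, hQx]; module
  rw [hvec, inner_add_left, inner_sub_left, inner_sub_left, real_inner_smul_left,
    real_inner_smul_left, real_inner_smul_left, real_inner_self_eq_norm_sq]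
  unfold iqcD
  rw [← hu, ← hQ]
  rcases le_or_gt ((L - m) * ⟪v, Q⟫ - ⟪Qx, Q⟫ + 1 / 2 * ‖Qx‖ ^ 2
      - (L - m) * (gc x - gc zc - m / 2 * ‖v‖ ^ 2)) 0 with hB | hB
  · have hρB : ρ2 * ((L - m) * ⟪v, Q⟫ - ⟪Qx, Q⟫ + 1 / 2 * ‖Qx‖ ^ 2
        - (L - m) * (gc x - gc zc - m / 2 * ‖v‖ ^ 2)) ≤ 0 := by
      have h := mul_le_mul_of_nonneg_left hB hρ0
      simpa using h
    linarith [hI3, hρB]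
  · have hρB : ρ2 * ((L - m) * ⟪v, Q⟫ - ⟪Qx, Q⟫ + 1 / 2 * ‖Qx‖ ^ 2
        - (L - m) * (gc x - gc zc - m / 2 * ‖v‖ ^ 2))
        ≤ (L - m) * ⟪v, Q⟫ - ⟪Qx, Q⟫ + 1 / 2 * ‖Qx‖ ^ 2
        - (L - m) * (gc x - gc zc - m / 2 * ‖v‖ ^ 2) := by
      have h := mul_le_mul_of_nonneg_right hρ1 hB.le
      simpa using h
    linarith [hI3, hII3, hρB]

end Aux

section VecAux
open scoped RealInnerProductSpace

lemma toE_norm_sq {ι : Type*} [Fintype ι] (v : ι → ℝ) : ‖toE v‖ ^ 2 = ∑ i, v i ^ 2 := by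
  rw [EuclideanSpace.norm_eq, Real.sq_sqrt (by positivity)]
  simp [toE]

lemma dot_eq_inner {ι : Type*} [Fintype ι] (v w : ι → ℝ) :
    dotProduct v w = ⟪toE v, toE w⟫ := by
  simp [toE, dotProduct, PiLp.inner_apply, mul_comm]

lemma toE_blk_norm {p d : ℕ} (v : Fin p × Fin d → ℝ) :
    ‖toE v‖ ^ 2 = ∑ i, ‖toE (blk v i)‖ ^ 2 := by
  simp only [toE_norm_sq]
  rw [Fintype.sum_prod_type]
  rfl

lemma pack_norm_sq (nξ p d : ℕ) (ξ : Fin nξ → ℝ) (ζ : Fin p → Fin 4 → Fin d → ℝ) :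
    ‖toE (pack nξ p d ξ ζ)‖ ^ 2
      = ‖toE ξ‖ ^ 2 + ∑ z : Fin p × Fin 4 × Fin d, (ζ z.1 z.2.1 z.2.2) ^ 2 := by
  simp only [toE_norm_sq]
  rw [Fintype.sum_sum_type]
  rfl

lemma sum_Icc_one (k : ℕ) (f : ℕ → ℝ) :
    ∑ t ∈ Finset.Icc 1 k, f t = ∑ j ∈ Finset.range k, f (j + 1) := by
  induction k with
  | zero => simp
  | succ k ih =>
    rw [Finset.sum_Icc_succ_top (by omega), ih, Finset.sum_range_succ]

lemma toE_smul {ι : Type*} [Fintype ι] (r : ℝ) (v : ι → ℝ) : toE (r • v) = r • toE v := by simp [toE]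

lemma toE_sub {ι : Type*} [Fintype ι] (v w : ι → ℝ) : toE (v - w) = toE v - toE w := by simp [toE]

end VecAux

/-- Variational-IQC tracking bound in the case of constant sector parameters
`m`, `L`. -/
theorem tracking_bound_variational_iqc_constant_sector
    (d p nξ nθ : ℕ) (hd : 1 ≤ d) (hp : 1 ≤ p)
    (Θ : Set (Fin nθ → ℝ)) (Vset : Set ((Fin nθ → ℝ) × (Fin nθ → ℝ)))
    (hV : ∀ θ Δθ : Fin nθ → ℝ, (θ, Δθ) ∈ Vset → θ ∈ Θ ∧ θ + Δθ ∈ Θ)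
    (A : (Fin nθ → ℝ) → Matrix (Fin nξ) (Fin nξ) ℝ)
    (B : (Fin nθ → ℝ) → Matrix (Fin nξ) (Fin p × Fin d) ℝ)
    (C : (Fin nθ → ℝ) → Matrix (Fin p × Fin d) (Fin nξ) ℝ)
    (D : (Fin nθ → ℝ) → Matrix (Fin p × Fin d) (Fin p × Fin d) ℝ)
    (U : Matrix (Fin nξ) (Fin d) ℝ)
    (hAU : ∀ θ ∈ Θ, A θ * U = U)
    (hCU : ∀ θ ∈ Θ, ∀ v : Fin d → ℝ,
      (C θ).mulVec (U.mulVec v) = fun ij => v ij.2)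
    (m L : (Fin nθ → ℝ) → ℝ)
    (m₀ L₀ : ℝ) (hm₀ : 0 < m₀) (hmL₀ : m₀ < L₀)
    (hconst : ∀ θ ∈ Θ, m θ = m₀ ∧ L θ = L₀)
    (hmL : ∀ θ ∈ Θ, 0 < m θ ∧ m θ < L θ)
    (a : (Fin nθ → ℝ) → ℝ)
    (ha : ∀ θ ∈ Θ, a θ = Real.sqrt (m θ * (L θ - m θ) / 2))
    (f : EuclideanSpace ℝ (Fin d) → (Fin nθ → ℝ) → ℝ)
    (f' : (Fin nθ → ℝ) → EuclideanSpace ℝ (Fin d) → EuclideanSpace ℝ (Fin d))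
    (hgrad : ∀ θ ∈ Θ, ∀ x, HasGradientAt (fun z => f z θ) (f' θ x) x)
    (hsc : ∀ θ ∈ Θ, ConvexOn ℝ Set.univ (fun z => f z θ - m θ / 2 * ‖z‖ ^ 2))
    (hlip : ∀ θ ∈ Θ, ∀ x y, ‖f' θ x - f' θ y‖ ≤ L θ * ‖x - y‖)
    (xstar : (Fin nθ → ℝ) → EuclideanSpace ℝ (Fin d))
    (hxstar : ∀ θ ∈ Θ, f' θ (xstar θ) = 0)
    (ρ : ℝ) (hρ0 : 0 < ρ) (hρ1 : ρ < 1)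
    (lam : Fin p → ℝ) (hlam : ∀ i, 0 ≤ lam i)
    (γξ γδ : ℝ) (hγξ : 0 ≤ γξ) (hγδ : 0 ≤ γδ)
    (lamLo lamHi : ℝ) (hlo : 0 < lamLo) (hlohi : lamLo ≤ lamHi)
    (P : (Fin nθ → ℝ) → Matrix (Fin nξ ⊕ (Fin p × Fin 4 × Fin d))
      (Fin nξ ⊕ (Fin p × Fin 4 × Fin d)) ℝ)
    (hPsymm : ∀ θ ∈ Θ, (P θ).IsSymm)
    (hPbounds : ∀ θ ∈ Θ, ∀ v : (Fin nξ ⊕ (Fin p × Fin 4 × Fin d)) → ℝ,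
      lamLo * ‖toE v‖ ^ 2 ≤ quadForm (P θ) v ∧
      quadForm (P θ) v ≤ lamHi * ‖toE v‖ ^ 2)
    (hLMI : ∀ θ Δθ : Fin nθ → ℝ, (θ, Δθ) ∈ Vset →
      ∀ (ξt : Fin nξ → ℝ) (ζ : Fin p → Fin 4 → Fin d → ℝ)
        (u : Fin p × Fin d → ℝ) (Δ : Fin nξ → ℝ) (w : Fin p × Fin d → ℝ),
        quadForm (P (θ + Δθ))
            (pack nξ p d ((A θ).mulVec ξt + (B θ).mulVec u + Δ)
              (fun i =>
                ![blk ((C θ).mulVec ξt + (D θ).mulVec u) i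
                    + (fun j => (C θ).mulVec Δ (⟨0, hp⟩, j)),
                  blk u i - blk w i,
                  blk u i - m θ • blk ((C θ).mulVec ξt + (D θ).mulVec u) i,
                  a θ • blk ((C θ).mulVec ξt + (D θ).mulVec u) i]))
          - ρ ^ 2 * quadForm (P θ) (pack nξ p d ξt ζ)
          + (∑ i : Fin p, lam i *
              (dotProduct
                (L θ • blk ((C θ).mulVec ξt + (D θ).mulVec u) i - blk u i
                  - ρ ^ 2 • (L θ • ζ i 0) + ρ ^ 2 • ζ i 1)
                (blk u i - m θ • blk ((C θ).mulVec ξt + (D θ).mulVec u) i)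
               + ρ ^ 2 * ‖toE (ζ i 3)‖ ^ 2
               - ρ ^ 2 * (a θ) ^ 2 * ‖toE (ζ i 0)‖ ^ 2
               + ρ ^ 2 / 2 * ‖toE (ζ i 2)‖ ^ 2
               - ρ ^ 2 / 2 * ‖toE (ζ i 1 - m θ • ζ i 0)‖ ^ 2))
          - γξ * ‖toE Δ‖ ^ 2 - γδ * ‖toE w‖ ^ 2 ≤ 0)
    (θseq : ℕ → Fin nθ → ℝ)
    (hθseq : ∀ k : ℕ, (θseq k, θseq (k + 1) - θseq k) ∈ Vset)
    (ξ : ℕ → Fin nξ → ℝ) (u y : ℕ → Fin p × Fin d → ℝ)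
    (hdyn : ∀ k : ℕ,
      ξ (k + 1) = (A (θseq k)).mulVec (ξ k) + (B (θseq k)).mulVec (u k) ∧
      y k = (C (θseq k)).mulVec (ξ k) + (D (θseq k)).mulVec (u k))
    (hu_grad : ∀ k : ℕ, ∀ i : Fin p,
      toE (blk (u k) i) = f' (θseq k) (toE (blk (y k) i))) :
    ∀ k : ℕ, 1 ≤ k →
      ‖toE (ξ k - U.mulVec (xstar (θseq k)))‖ ^ 2 ≤
        lamHi / lamLo * ρ ^ (2 * k) *
            ‖toE (ξ 0 - U.mulVec (xstar (θseq 0)))‖ ^ 2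
        + (1 / lamLo) * ∑ t ∈ Finset.Icc 1 k, ρ ^ (2 * (k - t)) *
            (γξ * ‖toE (U.mulVec (xstar (θseq (t - 1)))
                - U.mulVec (xstar (θseq t)))‖ ^ 2
             + γδ * ∑ i : Fin p,
                ‖f' (θseq (t - 1)) (toE (blk (y (t - 1)) i))
                  - f' (θseq t) (toE (blk (y (t - 1)) i))‖ ^ 2)
        + (1 / lamLo) * ∑ i : Fin p, (lam i * ρ ^ 2 * (L₀ - m₀)) *
            ∑ t ∈ Finset.Icc 1 (k - 1), ρ ^ (2 * (k - t - 1)) *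
              ((f (toE (blk (y (t - 1)) i)) (θseq t)
                  - f (xstar (θseq t)) (θseq t))
                - (f (toE (blk (y (t - 1)) i)) (θseq (t - 1))
                  - f (xstar (θseq (t - 1))) (θseq (t - 1)))) := by
  -- basic parameter facts
  have hmem : ∀ j, θseq j ∈ Θ := fun j => (hV _ _ (hθseq j)).1
  have hm0 : ∀ j, m (θseq j) = m₀ := fun j => (hconst _ (hmem j)).1
  have hL0 : ∀ j, L (θseq j) = L₀ := fun j => (hconst _ (hmem j)).2
  have hMpos : (0:ℝ) < L₀ - m₀ := by linarith
  have ha2 : ∀ j, (a (θseq j)) ^ 2 = m₀ * (L₀ - m₀) / 2 := by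
    intro j
    rw [ha _ (hmem j), hm0 j, hL0 j, Real.sq_sqrt (by nlinarith)]
  have hρ2nn : (0:ℝ) ≤ ρ ^ 2 := sq_nonneg ρ
  have hρ2le1 : ρ ^ 2 ≤ 1 := by nlinarith
  have hgradj : ∀ j x, HasGradientAt (fun z => f z (θseq j)) (f' (θseq j) x) x :=
    fun j => hgrad _ (hmem j)
  have hscj : ∀ j, ConvexOn ℝ Set.univ (fun z => f z (θseq j) - m₀ / 2 * ‖z‖ ^ 2) := by
    intro j; have := hsc _ (hmem j); rwa [hm0 j] at this
  have hlipj : ∀ j x₁ y₁, ‖f' (θseq j) x₁ - f' (θseq j) y₁‖ ≤ L₀ * ‖x₁ - y₁‖ := by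
    intro j x₁ y₁; have := hlip _ (hmem j) x₁ y₁; rwa [hL0 j] at this
  have hzj : ∀ j, f' (θseq j) (xstar (θseq j)) = 0 := fun j => hxstar _ (hmem j)
  have hsucc : ∀ j, θseq j + (θseq (j + 1) - θseq j) = θseq (j + 1) := fun j => by abel
  -- auxiliary sequences
  obtain ⟨ξt, hξt⟩ : ∃ F : ℕ → Fin nξ → ℝ,
      ∀ j, F j = ξ j - U.mulVec (xstar (θseq j)) := ⟨_, fun _ => rfl⟩
  obtain ⟨Δv, hΔv⟩ : ∃ F : ℕ → Fin nξ → ℝ,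
      ∀ j, F j = U.mulVec (xstar (θseq j)) - U.mulVec (xstar (θseq (j + 1))) :=
    ⟨_, fun _ => rfl⟩
  obtain ⟨ws, hws⟩ : ∃ F : ℕ → Fin p × Fin d → ℝ,
      ∀ j, F j = fun q => u j q - f' (θseq (j + 1)) (toE (blk (y j) q.1)) q.2 :=
    ⟨_, fun _ => rfl⟩
  obtain ⟨st, hst⟩ : ∃ F : ℕ → Fin p × Fin d → ℝ,
      ∀ j, F j = (C (θseq j)).mulVec (ξt j) + (D (θseq j)).mulVec (u j) := ⟨_, fun _ => rfl⟩
  obtain ⟨ζs, hζ0, hζS⟩ : ∃ F : ℕ → Fin p → Fin 4 → Fin d → ℝ,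
      F 0 = (fun _ _ _ => 0) ∧ ∀ j, F (j + 1) = fun i =>
        ![blk (st j) i + (fun jj => (C (θseq j)).mulVec (Δv j) (⟨0, hp⟩, jj)),
          blk (u j) i - blk (ws j) i,
          blk (u j) i - m (θseq j) • blk (st j) i,
          a (θseq j) • blk (st j) i] :=
    ⟨fun n => Nat.rec (fun _ _ _ => 0) (fun j _ => fun i =>
        ![blk (st j) i + (fun jj => (C (θseq j)).mulVec (Δv j) (⟨0, hp⟩, jj)),
          blk (u j) i - blk (ws j) i,
          blk (u j) i - m (θseq j) • blk (st j) i,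
          a (θseq j) • blk (st j) i]) n, rfl, fun _ => rfl⟩
  obtain ⟨Vq, hVq⟩ : ∃ F : ℕ → ℝ,
      ∀ j, F j = quadForm (P (θseq j)) (pack nξ p d (ξt j) (ζs j)) := ⟨_, fun _ => rfl⟩
  obtain ⟨Dk, hDk⟩ : ∃ F : ℕ → Fin p → ℝ, ∀ j i, F j i =
      iqcD (fun z => f z (θseq j)) (f' (θseq j)) m₀ L₀ (xstar (θseq j))
        (toE (blk (y j) i)) := ⟨_, fun _ _ => rfl⟩
  obtain ⟨Gs, hGs⟩ : ∃ F : ℕ → ℝ, ∀ j, F j =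
      γξ * ‖toE (Δv j)‖ ^ 2 + γδ * ‖toE (ws j)‖ ^ 2 := ⟨_, fun _ => rfl⟩
  obtain ⟨Fd, hFd⟩ : ∃ F : ℕ → Fin p → ℝ, ∀ j i, F j i =
      (f (toE (blk (y j) i)) (θseq (j + 1)) - f (xstar (θseq (j + 1))) (θseq (j + 1)))
      - (f (toE (blk (y j) i)) (θseq j) - f (xstar (θseq j)) (θseq j)) := ⟨_, fun _ _ => rfl⟩
  -- pointwise identities
  have hstP : ∀ j i jj, st j (i, jj) = y j (i, jj) - xstar (θseq j) jj := by
    intro j i jj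
    have h1 : st j = (C (θseq j)).mulVec (ξ j) + (D (θseq j)).mulVec (u j)
        - (C (θseq j)).mulVec (U.mulVec (xstar (θseq j))) := by
      rw [hst j, hξt j, Matrix.mulVec_sub]; abel
    rw [← (hdyn j).2, hCU _ (hmem j)] at h1
    have h2 := congrFun h1 (i, jj)
    simpa using h2
  have hstEv : ∀ j i, toE (blk (st j) i) = toE (blk (y j) i) - xstar (θseq j) :=
    fun j i => by ext jj; simpa [toE, blk] using hstP j i jj
  have huP : ∀ j i jj, u j (i, jj) = f' (θseq j) (toE (blk (y j) i)) jj :=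
    fun j i jj => by simpa [toE, blk] using congrArg (fun v => v jj) (hu_grad j i)
  have hwsP : ∀ j i jj, ws j (i, jj)
      = u j (i, jj) - f' (θseq (j + 1)) (toE (blk (y j) i)) jj := by
    intro j i jj; rw [hws j]
  have hcP : ∀ j jj, (C (θseq j)).mulVec (Δv j) (⟨0, hp⟩, jj)
      = xstar (θseq j) jj - xstar (θseq (j + 1)) jj := by
    intro j jj
    have hc : (C (θseq j)).mulVec (Δv j)
        = (fun q : Fin p × Fin d => xstar (θseq j) q.2)
          - (fun q : Fin p × Fin d => xstar (θseq (j + 1)) q.2) := by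
      rw [hΔv j, Matrix.mulVec_sub, hCU _ (hmem j), hCU _ (hmem j)]
    have h2 := congrFun hc (⟨0, hp⟩, jj)
    simpa using h2
  have hz0V : ∀ j i, toE (blk (st j) i
        + (fun jj => (C (θseq j)).mulVec (Δv j) (⟨0, hp⟩, jj)))
      = toE (blk (y j) i) - xstar (θseq (j + 1)) := by
    intro j i
    ext jj
    show st j (i, jj) + (C (θseq j)).mulVec (Δv j) (⟨0, hp⟩, jj)
      = y j (i, jj) - xstar (θseq (j + 1)) jj
    rw [hstP j i jj, hcP j jj]; ring
  have hz1V : ∀ j i, toE (blk (u j) i - blk (ws j) i)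
      = f' (θseq (j + 1)) (toE (blk (y j) i)) := by
    intro j i
    ext jj
    show u j (i, jj) - ws j (i, jj) = f' (θseq (j + 1)) (toE (blk (y j) i)) jj
    rw [hwsP j i jj]; ring
  have hwsV : ∀ j i, toE (blk (ws j) i)
      = f' (θseq j) (toE (blk (y j) i)) - f' (θseq (j + 1)) (toE (blk (y j) i)) := by
    intro j i
    ext jj
    show ws j (i, jj)
      = f' (θseq j) (toE (blk (y j) i)) jj - f' (θseq (j + 1)) (toE (blk (y j) i)) jj
    rw [hwsP j i jj, huP j i jj]
  -- error state recursion
  have hstep : ∀ j, (A (θseq j)).mulVec (ξt j) + (B (θseq j)).mulVec (u j) + Δv j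
      = ξt (j + 1) := by
    intro j
    rw [hξt (j + 1), (hdyn j).1, hξt j, hΔv j, Matrix.mulVec_sub, Matrix.mulVec_mulVec,
      hAU _ (hmem j)]
    abel
  -- nonnegativity of the storage terms
  have hDnn : ∀ j i, 0 ≤ Dk j i := by
    intro j i
    rw [hDk]
    exact iqcD_nonneg _ _ m₀ L₀ hm₀ hmL₀ (hgradj j) (hscj j) (hlipj j) _ (hzj j) _
  have hsumDnn : ∀ j, 0 ≤ ∑ i, lam i * Dk j i :=
    fun j => Finset.sum_nonneg fun i _ => mul_nonneg (hlam i) (hDnn j i)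
  -- base dissipation step
  have hT0 : Vq (0 + 1) + ∑ i, lam i * Dk 0 i ≤ ρ ^ 2 * Vq 0 + Gs 0 := by
    have h := hLMI (θseq 0) (θseq (0 + 1) - θseq 0) (hθseq 0) (ξt 0) (ζs 0) (u 0)
      (Δv 0) (ws 0)
    rw [hsucc 0, ← hst 0, hstep 0, ← hζS 0, ← hVq (0 + 1), ← hVq 0, hm0 0, hL0 0,
      ha2 0] at h
    have hb0 : ∀ i : Fin p, Dk 0 i ≤
        dotProduct
          (L₀ • blk (st 0) i - blk (u 0) i - ρ ^ 2 • (L₀ • ζs 0 i 0) + ρ ^ 2 • ζs 0 i 1)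
          (blk (u 0) i - m₀ • blk (st 0) i)
        + ρ ^ 2 * ‖toE (ζs 0 i 3)‖ ^ 2
        - ρ ^ 2 * (m₀ * (L₀ - m₀) / 2) * ‖toE (ζs 0 i 0)‖ ^ 2
        + ρ ^ 2 / 2 * ‖toE (ζs 0 i 2)‖ ^ 2
        - ρ ^ 2 / 2 * ‖toE (ζs 0 i 1 - m₀ • ζs 0 i 0)‖ ^ 2 := by
      intro i
      have hz : ∀ l : Fin 4, ζs 0 i l = (0 : Fin d → ℝ) := by intro l; rw [hζ0]; rfl
      have htoE0 : toE (0 : Fin d → ℝ) = (0 : EuclideanSpace ℝ (Fin d)) := rfl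
      rw [hz 0, hz 1, hz 2, hz 3]
      simp only [smul_zero, sub_zero, add_zero, htoE0, norm_zero]
      rw [dot_eq_inner, hDk]
      have Ea : toE (L₀ • blk (st 0) i - blk (u 0) i)
          = L₀ • (toE (blk (y 0) i) - xstar (θseq 0))
            - f' (θseq 0) (toE (blk (y 0) i)) := by
        rw [toE_sub, toE_smul, hstEv 0 i, hu_grad 0 i]
      have Eb : toE (blk (u 0) i - m₀ • blk (st 0) i)
          = f' (θseq 0) (toE (blk (y 0) i))
            - m₀ • (toE (blk (y 0) i) - xstar (θseq 0)) := by
        rw [toE_sub, toE_smul, hstEv 0 i, hu_grad 0 i]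
      rw [Ea, Eb]
      have HS0 : iqcD (fun z => f z (θseq 0)) (f' (θseq 0)) m₀ L₀ (xstar (θseq 0))
            (toE (blk (y 0) i))
          ≤ ⟪L₀ • (toE (blk (y 0) i) - xstar (θseq 0))
              - f' (θseq 0) (toE (blk (y 0) i)),
             f' (θseq 0) (toE (blk (y 0) i))
              - m₀ • (toE (blk (y 0) i) - xstar (θseq 0))⟫ :=
        sigma_zero _ _ m₀ L₀ hm₀ hmL₀ (hgradj 0) (hscj 0) (hlipj 0) _ (hzj 0) _
      have h0 : (0:ℝ) ^ 2 = 0 := by norm_num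
      rw [h0]
      linarith [HS0]
    have hsum := Finset.sum_le_sum
      (fun i (_ : i ∈ Finset.univ) => mul_le_mul_of_nonneg_left (hb0 i) (hlam i))
    rw [hGs 0]
    linarith [h, hsum]
  -- inductive dissipation step
  have hTS : ∀ n, Vq (n + 1 + 1) + ∑ i, lam i * Dk (n + 1) i
      ≤ ρ ^ 2 * (Vq (n + 1) + ∑ i, lam i * Dk n i) + Gs (n + 1)
        + ρ ^ 2 * (L₀ - m₀) * ∑ i, lam i * Fd n i := by
    intro n
    have h := hLMI (θseq (n + 1)) (θseq (n + 1 + 1) - θseq (n + 1)) (hθseq (n + 1))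
      (ξt (n + 1)) (ζs (n + 1)) (u (n + 1)) (Δv (n + 1)) (ws (n + 1))
    rw [hsucc (n + 1), ← hst (n + 1), hstep (n + 1), ← hζS (n + 1), ← hVq (n + 1 + 1),
      ← hVq (n + 1), hm0 (n + 1), hL0 (n + 1), ha2 (n + 1)] at h
    have hb : ∀ i : Fin p, Dk (n + 1) i - ρ ^ 2 * Dk n i - ρ ^ 2 * (L₀ - m₀) * Fd n i ≤
        dotProduct
          (L₀ • blk (st (n + 1)) i - blk (u (n + 1)) i
            - ρ ^ 2 • (L₀ • ζs (n + 1) i 0) + ρ ^ 2 • ζs (n + 1) i 1)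
          (blk (u (n + 1)) i - m₀ • blk (st (n + 1)) i)
        + ρ ^ 2 * ‖toE (ζs (n + 1) i 3)‖ ^ 2
        - ρ ^ 2 * (m₀ * (L₀ - m₀) / 2) * ‖toE (ζs (n + 1) i 0)‖ ^ 2
        + ρ ^ 2 / 2 * ‖toE (ζs (n + 1) i 2)‖ ^ 2
        - ρ ^ 2 / 2 * ‖toE (ζs (n + 1) i 1 - m₀ • ζs (n + 1) i 0)‖ ^ 2 := by
      intro i
      have hz0 : ζs (n + 1) i 0 = blk (st n) i
          + (fun jj => (C (θseq n)).mulVec (Δv n) (⟨0, hp⟩, jj)) := by rw [hζS n]; rfl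
      have hz1 : ζs (n + 1) i 1 = blk (u n) i - blk (ws n) i := by rw [hζS n]; rfl
      have hz2 : ζs (n + 1) i 2 = blk (u n) i - m (θseq n) • blk (st n) i := by
        rw [hζS n]; rfl
      have hz3 : ζs (n + 1) i 3 = a (θseq n) • blk (st n) i := by rw [hζS n]; rfl
      rw [hz0, hz1, hz2, hz3, hDk, hDk, hFd, dot_eq_inner]
      -- vector identities
      have Esplit : toE (L₀ • blk (st (n + 1)) i - blk (u (n + 1)) i
            - ρ ^ 2 • (L₀ • (blk (st n) i
                + (fun jj => (C (θseq n)).mulVec (Δv n) (⟨0, hp⟩, jj))))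
            + ρ ^ 2 • (blk (u n) i - blk (ws n) i))
          = L₀ • toE (blk (st (n + 1)) i) - toE (blk (u (n + 1)) i)
            - ρ ^ 2 • (L₀ • toE (blk (st n) i
                + (fun jj => (C (θseq n)).mulVec (Δv n) (⟨0, hp⟩, jj))))
            + ρ ^ 2 • toE (blk (u n) i - blk (ws n) i) := rfl
      rw [Esplit, hstEv (n + 1) i, hu_grad (n + 1) i, hz0V n i, hz1V n i]
      have Eb : toE (blk (u (n + 1)) i - m₀ • blk (st (n + 1)) i)
          = f' (θseq (n + 1)) (toE (blk (y (n + 1)) i))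
            - m₀ • (toE (blk (y (n + 1)) i) - xstar (θseq (n + 1))) := by
        rw [toE_sub, toE_smul, hstEv (n + 1) i, hu_grad (n + 1) i]
      rw [Eb]
      have N3 : ‖toE (a (θseq n) • blk (st n) i)‖ ^ 2
          = m₀ * (L₀ - m₀) / 2 * ‖toE (blk (y n) i) - xstar (θseq n)‖ ^ 2 := by
        rw [toE_smul, hstEv n i, norm_smul, mul_pow, Real.norm_eq_abs, sq_abs, ha2 n]
      rw [N3]
      have N2 : toE (blk (u n) i - m (θseq n) • blk (st n) i)
          = f' (θseq n) (toE (blk (y n) i))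
            - m₀ • (toE (blk (y n) i) - xstar (θseq n)) := by
        rw [toE_sub, toE_smul, hstEv n i, hu_grad n i, hm0 n]
      rw [N2]
      have N1 : toE (blk (u n) i - blk (ws n) i
            - m₀ • (blk (st n) i
              + (fun jj => (C (θseq n)).mulVec (Δv n) (⟨0, hp⟩, jj))))
          = f' (θseq (n + 1)) (toE (blk (y n) i))
            - m₀ • (toE (blk (y n) i) - xstar (θseq (n + 1))) := by
        rw [toE_sub, toE_smul, hz0V n i, hz1V n i]
      rw [N1]
      have HS : iqcD (fun z => f z (θseq (n + 1))) (f' (θseq (n + 1))) m₀ L₀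
            (xstar (θseq (n + 1))) (toE (blk (y (n + 1)) i))
          - ρ ^ 2 * iqcD (fun z => f z (θseq n)) (f' (θseq n)) m₀ L₀
            (xstar (θseq n)) (toE (blk (y n) i))
          - ρ ^ 2 * (L₀ - m₀) *
            ((f (toE (blk (y n) i)) (θseq (n + 1))
                - f (xstar (θseq (n + 1))) (θseq (n + 1)))
              - (f (toE (blk (y n) i)) (θseq n) - f (xstar (θseq n)) (θseq n)))
          ≤ ⟪L₀ • (toE (blk (y (n + 1)) i) - xstar (θseq (n + 1)))
              - f' (θseq (n + 1)) (toE (blk (y (n + 1)) i))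
              - ρ ^ 2 • (L₀ • (toE (blk (y n) i) - xstar (θseq (n + 1))))
              + ρ ^ 2 • f' (θseq (n + 1)) (toE (blk (y n) i)),
             f' (θseq (n + 1)) (toE (blk (y (n + 1)) i))
              - m₀ • (toE (blk (y (n + 1)) i) - xstar (θseq (n + 1)))⟫
            + ρ ^ 2 * (m₀ * (L₀ - m₀) / 2) * ‖toE (blk (y n) i) - xstar (θseq n)‖ ^ 2
            - ρ ^ 2 * (m₀ * (L₀ - m₀) / 2)
              * ‖toE (blk (y n) i) - xstar (θseq (n + 1))‖ ^ 2
            + ρ ^ 2 / 2 * ‖f' (θseq n) (toE (blk (y n) i))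
                - m₀ • (toE (blk (y n) i) - xstar (θseq n))‖ ^ 2
            - ρ ^ 2 / 2 * ‖f' (θseq (n + 1)) (toE (blk (y n) i))
                - m₀ • (toE (blk (y n) i) - xstar (θseq (n + 1)))‖ ^ 2 :=
        sigma_step _ _ _ _ m₀ L₀ (ρ ^ 2) hm₀ hmL₀ hρ2nn hρ2le1 (hgradj (n + 1))
          (hscj (n + 1)) (hlipj (n + 1)) _ _ (hzj (n + 1)) _ _
      linarith [HS]
    have hsum := Finset.sum_le_sum
      (fun i (_ : i ∈ Finset.univ) => mul_le_mul_of_nonneg_left (hb i) (hlam i))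
    have hexp : ∑ i, lam i * (Dk (n + 1) i - ρ ^ 2 * Dk n i
          - ρ ^ 2 * (L₀ - m₀) * Fd n i)
        = ∑ i, lam i * Dk (n + 1) i - ρ ^ 2 * ∑ i, lam i * Dk n i
          - ρ ^ 2 * (L₀ - m₀) * ∑ i, lam i * Fd n i := by
      rw [Finset.mul_sum, Finset.mul_sum, ← Finset.sum_sub_distrib,
        ← Finset.sum_sub_distrib]
      exact Finset.sum_congr rfl fun i _ => by ring
    rw [hGs (n + 1)]
    linarith [h, hsum, hexp.le, hexp.ge]
  -- unrolled bound
  have hunroll : ∀ n, Vq (n + 1) + ∑ i, lam i * Dk n i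
      ≤ ρ ^ (2 * n) * (ρ ^ 2 * Vq 0 + Gs 0)
        + ∑ j ∈ Finset.range n, ρ ^ (2 * (n - 1 - j))
            * (Gs (j + 1) + ρ ^ 2 * (L₀ - m₀) * ∑ i, lam i * Fd j i) := by
    intro n
    induction n with
    | zero => simpa using hT0
    | succ n ih =>
      have h2 := hTS n
      have h3 := mul_le_mul_of_nonneg_left ih hρ2nn
      have hpow : ρ ^ 2 * ρ ^ (2 * n) = ρ ^ (2 * (n + 1)) := by
        rw [← pow_add]; congr 1; omega
      have hsum2 : ρ ^ 2 * ∑ j ∈ Finset.range n, ρ ^ (2 * (n - 1 - j))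
            * (Gs (j + 1) + ρ ^ 2 * (L₀ - m₀) * ∑ i, lam i * Fd j i)
          = ∑ j ∈ Finset.range n, ρ ^ (2 * (n + 1 - 1 - j))
            * (Gs (j + 1) + ρ ^ 2 * (L₀ - m₀) * ∑ i, lam i * Fd j i) := by
        rw [Finset.mul_sum]
        refine Finset.sum_congr rfl fun j hj => ?_
        have hj' : j < n := Finset.mem_range.mp hj
        rw [← mul_assoc, ← pow_add]
        congr 2
        omega
      rw [Finset.sum_range_succ]
      have hlast : 2 * (n + 1 - 1 - n) = 0 := by omega
      rw [hlast, pow_zero, one_mul]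
      have hdist : ρ ^ 2 * (ρ ^ (2 * n) * (ρ ^ 2 * Vq 0 + Gs 0))
          = ρ ^ (2 * (n + 1)) * (ρ ^ 2 * Vq 0 + Gs 0) := by
        rw [← mul_assoc, hpow]
      have hmul : ρ ^ 2 * (ρ ^ (2 * n) * (ρ ^ 2 * Vq 0 + Gs 0)
            + ∑ j ∈ Finset.range n, ρ ^ (2 * (n - 1 - j))
              * (Gs (j + 1) + ρ ^ 2 * (L₀ - m₀) * ∑ i, lam i * Fd j i))
          = ρ ^ (2 * (n + 1)) * (ρ ^ 2 * Vq 0 + Gs 0)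
            + ∑ j ∈ Finset.range n, ρ ^ (2 * (n + 1 - 1 - j))
              * (Gs (j + 1) + ρ ^ 2 * (L₀ - m₀) * ∑ i, lam i * Fd j i) := by
        rw [mul_add, hdist, hsum2]
      linarith [h2, h3, hmul.le, hmul.ge]
  -- final assembly
  intro k hk
  obtain ⟨n, rfl⟩ : ∃ n, k = n + 1 := ⟨k - 1, by omega⟩
  rw [← hξt (n + 1), ← hξt 0]
  -- lower/upper quadratic form bounds
  have hlow : lamLo * ‖toE (ξt (n + 1))‖ ^ 2 ≤ Vq (n + 1) := by
    rw [hVq (n + 1)]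
    refine le_trans ?_ (hPbounds (θseq (n + 1)) (hmem (n + 1))
      (pack nξ p d (ξt (n + 1)) (ζs (n + 1)))).1
    have hge : ‖toE (ξt (n + 1))‖ ^ 2
        ≤ ‖toE (pack nξ p d (ξt (n + 1)) (ζs (n + 1)))‖ ^ 2 := by
      rw [pack_norm_sq]
      have h0 : (0:ℝ) ≤ ∑ z : Fin p × Fin 4 × Fin d, (ζs (n + 1) z.1 z.2.1 z.2.2) ^ 2 :=
        Finset.sum_nonneg fun _ _ => sq_nonneg _
      linarith
    exact mul_le_mul_of_nonneg_left hge hlo.le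
  have hup : Vq 0 ≤ lamHi * ‖toE (ξt 0)‖ ^ 2 := by
    rw [hVq 0]
    refine le_trans (hPbounds (θseq 0) (hmem 0) _).2 ?_
    rw [pack_norm_sq, hζ0]
    simp
  have hGmatch : ∀ j, Gs j
      = γξ * ‖toE (U.mulVec (xstar (θseq j)) - U.mulVec (xstar (θseq (j + 1))))‖ ^ 2
        + γδ * ∑ i, ‖f' (θseq j) (toE (blk (y j) i))
            - f' (θseq (j + 1)) (toE (blk (y j) i))‖ ^ 2 := by
    intro j
    rw [hGs j, hΔv j]
    congr 1
    rw [toE_blk_norm (ws j)]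
    congr 1
    refine Finset.sum_congr rfl fun i _ => ?_
    rw [hwsV j i]
  -- rewrite the two goal sums
  have hS1 : (∑ t ∈ Finset.Icc 1 (n + 1), ρ ^ (2 * (n + 1 - t))
        * (γξ * ‖toE (U.mulVec (xstar (θseq (t - 1)))
            - U.mulVec (xstar (θseq t)))‖ ^ 2
          + γδ * ∑ i, ‖f' (θseq (t - 1)) (toE (blk (y (t - 1)) i))
              - f' (θseq t) (toE (blk (y (t - 1)) i))‖ ^ 2))
      = (∑ j ∈ Finset.range n, ρ ^ (2 * (n - 1 - j)) * Gs (j + 1))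
        + ρ ^ (2 * n) * Gs 0 := by
    rw [sum_Icc_one]
    rw [Finset.sum_range_succ']
    congr 1
    · refine Finset.sum_congr rfl fun j hj => ?_
      have e1 : n + 1 - (j + 1 + 1) = n - 1 - j := by omega
      have e2 : j + 1 + 1 - 1 = j + 1 := by omega
      rw [e1, e2, ← hGmatch (j + 1)]
    · have e1 : n + 1 - (0 + 1) = n := by omega
      have e2 : 0 + 1 - 1 = 0 := by omega
      rw [e1, e2, ← hGmatch 0]
  have hS2 : (∑ i, (lam i * ρ ^ 2 * (L₀ - m₀)) * ∑ t ∈ Finset.Icc 1 (n + 1 - 1),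
        ρ ^ (2 * (n + 1 - t - 1)) *
          ((f (toE (blk (y (t - 1)) i)) (θseq t) - f (xstar (θseq t)) (θseq t))
            - (f (toE (blk (y (t - 1)) i)) (θseq (t - 1))
              - f (xstar (θseq (t - 1))) (θseq (t - 1)))))
      = ∑ j ∈ Finset.range n, ρ ^ (2 * (n - 1 - j))
          * (ρ ^ 2 * (L₀ - m₀) * ∑ i, lam i * Fd j i) := by
    have hn1 : n + 1 - 1 = n := by omega
    rw [hn1]
    have hper : ∀ i : Fin p, (∑ t ∈ Finset.Icc 1 n, ρ ^ (2 * (n + 1 - t - 1)) *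
          ((f (toE (blk (y (t - 1)) i)) (θseq t) - f (xstar (θseq t)) (θseq t))
            - (f (toE (blk (y (t - 1)) i)) (θseq (t - 1))
              - f (xstar (θseq (t - 1))) (θseq (t - 1)))))
        = ∑ j ∈ Finset.range n, ρ ^ (2 * (n - 1 - j)) * Fd j i := by
      intro i
      rw [sum_Icc_one]
      refine Finset.sum_congr rfl fun j hj => ?_
      have e1 : n + 1 - (j + 1) - 1 = n - 1 - j := by omega
      have e2 : j + 1 - 1 = j := by omega
      rw [e1, e2, ← hFd j i]
    calc (∑ i, (lam i * ρ ^ 2 * (L₀ - m₀)) * ∑ t ∈ Finset.Icc 1 n,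
          ρ ^ (2 * (n + 1 - t - 1)) *
          ((f (toE (blk (y (t - 1)) i)) (θseq t) - f (xstar (θseq t)) (θseq t))
            - (f (toE (blk (y (t - 1)) i)) (θseq (t - 1))
              - f (xstar (θseq (t - 1))) (θseq (t - 1)))))
        = ∑ i, (lam i * ρ ^ 2 * (L₀ - m₀))
            * ∑ j ∈ Finset.range n, ρ ^ (2 * (n - 1 - j)) * Fd j i := by
          refine Finset.sum_congr rfl fun i _ => ?_
          rw [hper i]
      _ = ∑ i, ∑ j ∈ Finset.range n, ρ ^ (2 * (n - 1 - j))
            * (ρ ^ 2 * (L₀ - m₀) * (lam i * Fd j i)) := by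
          refine Finset.sum_congr rfl fun i _ => ?_
          rw [Finset.mul_sum]
          try exact Finset.sum_congr rfl fun j _ => by ring
      _ = ∑ j ∈ Finset.range n, ∑ i, ρ ^ (2 * (n - 1 - j))
            * (ρ ^ 2 * (L₀ - m₀) * (lam i * Fd j i)) := Finset.sum_comm
      _ = ∑ j ∈ Finset.range n, ρ ^ (2 * (n - 1 - j))
            * (ρ ^ 2 * (L₀ - m₀) * ∑ i, lam i * Fd j i) := by
          refine Finset.sum_congr rfl fun j _ => ?_
          rw [Finset.mul_sum, Finset.mul_sum]
          try exact Finset.sum_congr rfl fun i _ => by ring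
  rw [hS1, hS2]
  set X0 := ‖toE (ξt 0)‖ ^ 2 with hX0
  set Xk := ‖toE (ξt (n + 1))‖ ^ 2 with hXk
  set SG := ∑ j ∈ Finset.range n, ρ ^ (2 * (n - 1 - j)) * Gs (j + 1) with hSG
  set SF := ∑ j ∈ Finset.range n, ρ ^ (2 * (n - 1 - j))
      * (ρ ^ 2 * (L₀ - m₀) * ∑ i, lam i * Fd j i) with hSF
  have hmain := hunroll n
  have hsplit : ∑ j ∈ Finset.range n, ρ ^ (2 * (n - 1 - j))
        * (Gs (j + 1) + ρ ^ 2 * (L₀ - m₀) * ∑ i, lam i * Fd j i)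
      = SG + SF := by
    rw [hSG, hSF, ← Finset.sum_add_distrib]
    exact Finset.sum_congr rfl fun j _ => by ring
  have hv0 : ρ ^ (2 * (n + 1)) * Vq 0 ≤ ρ ^ (2 * (n + 1)) * (lamHi * X0) :=
    mul_le_mul_of_nonneg_left hup (pow_nonneg hρ0.le _)
  have e1 : ρ ^ (2 * n) * (ρ ^ 2 * Vq 0 + Gs 0)
      = ρ ^ (2 * (n + 1)) * Vq 0 + ρ ^ (2 * n) * Gs 0 := by
    have hpow' : ρ ^ 2 * ρ ^ (2 * n) = ρ ^ (2 * (n + 1)) := by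
      rw [← pow_add]
      congr 1
      omega
    rw [mul_add, ← mul_assoc, mul_comm (ρ ^ (2 * n)) (ρ ^ 2), hpow']
  have e2 : ρ ^ (2 * (n + 1)) * (lamHi * X0) = lamHi * (ρ ^ (2 * (n + 1)) * X0) := by
    ring
  have hfin : lamLo * Xk ≤ lamHi * (ρ ^ (2 * (n + 1)) * X0)
      + (SG + ρ ^ (2 * n) * Gs 0) + SF := by
    linarith [hlow, hmain, hsumDnn n, hsplit, e1, hv0, e2]
  have hRHS : lamHi / lamLo * ρ ^ (2 * (n + 1)) * X0
      + 1 / lamLo * (SG + ρ ^ (2 * n) * Gs 0) + 1 / lamLo * SF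
      = (lamHi * (ρ ^ (2 * (n + 1)) * X0) + (SG + ρ ^ (2 * n) * Gs 0) + SF) / lamLo := by
    field_simp
  rw [hRHS, le_div_iff₀ hlo]
  linarith [hfin]
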